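/- Let A, B, C be subsets of a finite set V such that A\(B∪C), B\(A∪C), C\(A∪B), and A∩B∩C are all nonempty. Then there is no circular ordering (bijection from V to ZMod n) under which f(A), f(B), f(C) are all cyclic intervals. -/

import Mathlib

/-- A cyclic interval `{a, a+1, …, a+l-1}` of `ZMod n`. -/
def IsCyclicInterval {n : ℕ} (S : Set (ZMod n)) : Prop :=
  ∃ (a : ZMod n) (l : ℕ), S = (fun t : ℕ => a + (t : ZMod n)) '' {t | t < l}

lemma key_cyclic {n : ℕ} [NeZero n] {S : Set (ZMod n)} (hS : IsCyclicInterval S)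
    {X Y Z W : ZMod n} (hX : X ∈ S) (hY : Y ∉ S) (hZ : Z ∉ S)
    (h1 : (Y - X).val ≤ (W - X).val) (h2 : (W - X).val ≤ (Z - X).val) : W ∉ S := by
  obtain ⟨a, l, rfl⟩ := hS
  have hn : 0 < n := NeZero.pos n
  have hln : l ≤ n := by
    by_contra h
    push_neg at h
    exact hY ⟨(Y - a).val, lt_of_lt_of_le (ZMod.val_lt _) (le_of_lt h), by
      simp [ZMod.natCast_val, ZMod.cast_id]⟩
  have mem_iff : ∀ z : ZMod n,
      z ∈ (fun t : ℕ => a + (t : ZMod n)) '' {t | t < l} ↔ (z - a).val < l := by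
    intro z
    constructor
    · rintro ⟨t, ht, rfl⟩
      have : ((t : ZMod n) : ZMod n).val = t % n := ZMod.val_natCast n t
      have h2 : (a + (t : ZMod n) - a) = (t : ZMod n) := by ring
      rw [h2, ZMod.val_natCast]
      exact lt_of_le_of_lt (Nat.mod_le t n) ht
    · intro h
      exact ⟨(z - a).val, h, by simp [ZMod.natCast_val, ZMod.cast_id]⟩
  set s := (X - a).val with hs_def
  have hs : s < l := (mem_iff X).mp hX
  have val_eq : ∀ z : ZMod n, (z - a).val = ((z - X).val + s) % n := by
    intro z
    have : z - a = (z - X) + (X - a) := by ring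
    rw [this, ZMod.val_add]
  have notin_iff : ∀ z : ZMod n,
      z ∉ (fun t : ℕ => a + (t : ZMod n)) '' {t | t < l} ↔
        l ≤ (z - X).val + s ∧ (z - X).val + s < n := by
    intro z
    rw [mem_iff, val_eq]
    set u := (z - X).val + s with hu_def
    have hv : (z - X).val < n := ZMod.val_lt _
    have hu2 : u < 2 * n := by omega
    rcases lt_or_ge u n with h | h
    · rw [Nat.mod_eq_of_lt h]
      omega
    · have : u % n = u - n := by
        rw [Nat.mod_eq_sub_mod h, Nat.mod_eq_of_lt (by omega)]
      rw [this]
      omega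
  have hY' := (notin_iff Y).mp hY
  have hZ' := (notin_iff Z).mp hZ
  rw [notin_iff W]
  omega

/-- Three sets with a common point, each containing a private element, cannot all be
realized as cyclic intervals under any circular ordering. -/
theorem stmt_2 {V : Type*} [Fintype V] (A B C : Set V)
    (hA : (A \ (B ∪ C)).Nonempty) (hB : (B \ (A ∪ C)).Nonempty)
    (hC : (C \ (A ∪ B)).Nonempty) (hABC : (A ∩ B ∩ C).Nonempty) :
    ¬ ∃ f : V ≃ ZMod (Fintype.card V),
        IsCyclicInterval (⇑f '' A) ∧ IsCyclicInterval (⇑f '' B) ∧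
        IsCyclicInterval (⇑f '' C) := by
  obtain ⟨p, hpA, hp'⟩ := hA
  obtain ⟨q, hqB, hq'⟩ := hB
  obtain ⟨r, hrC, hr'⟩ := hC
  obtain ⟨x, ⟨⟨hxA, hxB⟩, hxC⟩⟩ := hABC
  simp only [Set.mem_union, not_or] at hp' hq' hr'
  rintro ⟨f, hIA, hIB, hIC⟩
  haveI : NeZero (Fintype.card V) := ⟨(Fintype.card_pos_iff.mpr ⟨x⟩).ne'⟩
  have hinj := f.injective
  have memA : ∀ v : V, f v ∈ ⇑f '' A ↔ v ∈ A := fun v => hinj.mem_set_image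
  have memB : ∀ v : V, f v ∈ ⇑f '' B ↔ v ∈ B := fun v => hinj.mem_set_image
  have memC : ∀ v : V, f v ∈ ⇑f '' C ↔ v ∈ C := fun v => hinj.mem_set_image
  have hpA' : f p ∈ ⇑f '' A := (memA p).mpr hpA
  have hpB' : f p ∉ ⇑f '' B := fun h => hp'.1 ((memB p).mp h)
  have hpC' : f p ∉ ⇑f '' C := fun h => hp'.2 ((memC p).mp h)
  have hqB' : f q ∈ ⇑f '' B := (memB q).mpr hqB
  have hqA' : f q ∉ ⇑f '' A := fun h => hq'.1 ((memA q).mp h)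
  have hqC' : f q ∉ ⇑f '' C := fun h => hq'.2 ((memC q).mp h)
  have hrC' : f r ∈ ⇑f '' C := (memC r).mpr hrC
  have hrA' : f r ∉ ⇑f '' A := fun h => hr'.1 ((memA r).mp h)
  have hrB' : f r ∉ ⇑f '' B := fun h => hr'.2 ((memB r).mp h)
  have hxA' : f x ∈ ⇑f '' A := (memA x).mpr hxA
  have hxB' : f x ∈ ⇑f '' B := (memB x).mpr hxB
  have hxC' : f x ∈ ⇑f '' C := (memC x).mpr hxC
  set pp := (f p - f x).val
  set qq := (f q - f x).val
  set rr := (f r - f x).val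
  rcases le_total pp qq with h1 | h1 <;> rcases le_total qq rr with h2 | h2 <;>
    rcases le_total pp rr with h3 | h3
  · exact key_cyclic hIB hxB' hpB' hrB' h1 h2 hqB'
  · exact key_cyclic hIB hxB' hpB' hrB' h1 h2 hqB'
  · exact key_cyclic hIC hxC' hpC' hqC' h3 h2 hrC'
  · exact key_cyclic hIA hxA' hrA' hqA' h3 h1 hpA'
  · exact key_cyclic hIA hxA' hqA' hrA' h1 h3 hpA'
  · exact key_cyclic hIC hxC' hqC' hpC' h2 h3 hrC'
  · exact key_cyclic hIB hxB' hrB' hpB' h2 h1 hqB'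
  · exact key_cyclic hIB hxB' hrB' hpB' h2 h1 hqB'
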